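/- For every integer T₀ ≥ 1 and all real numbers s ∈ [0,1) and λ ∈ (0,1): λ((1−s)² − λ^{1/T₀}) ≤ T₀^{T₀}(1−s)^{2T₀+2}/(1+T₀)^{T₀+1}. In particular, taking s = 0, λ(1 − λ^{1/T₀}) ≤ T₀^{T₀}/(1+T₀)^{T₀+1}. -/

import Mathlib

noncomputable section

private lemma key_poly (T : ℕ) (t : ℝ) (ht : 0 ≤ t) :
    ((T : ℝ) + 1) * t ^ T ≤ 1 + (T : ℝ) * t ^ (T + 1) := by
  have h1 : ∀ i ∈ Finset.range T, 0 ≤ (1 - t) * (t ^ i - t ^ T) := by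
    intro i hi
    have hiT : i ≤ T := (Finset.mem_range.mp hi).le
    rcases le_total t 1 with h | h
    · have : t ^ T ≤ t ^ i := pow_le_pow_of_le_one ht h hiT
      have h1t : 0 ≤ 1 - t := by linarith
      nlinarith
    · have : t ^ i ≤ t ^ T := pow_le_pow_right₀ h hiT
      have h1t : 1 - t ≤ 0 := by linarith
      nlinarith
  have h2 : 0 ≤ ∑ i ∈ Finset.range T, (1 - t) * (t ^ i - t ^ T) :=
    Finset.sum_nonneg h1
  have h3 : ∑ i ∈ Finset.range T, (1 - t) * (t ^ i - t ^ T)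
      = 1 + (T : ℝ) * t ^ (T + 1) - ((T : ℝ) + 1) * t ^ T := by
    have g := geom_sum_mul t T
    have hsum : ∑ i ∈ Finset.range T, (1 - t) * (t ^ i - t ^ T)
        = (1 - t) * (∑ i ∈ Finset.range T, t ^ i) - (T : ℝ) * ((1 - t) * t ^ T) := by
      simp only [mul_sub, Finset.sum_sub_distrib, Finset.sum_const,
        Finset.card_range, nsmul_eq_mul, Finset.mul_sum]
    rw [hsum]
    have hg : (1 - t) * (∑ i ∈ Finset.range T, t ^ i) = 1 - t ^ T := by
      linear_combination -g
    rw [hg, pow_succ]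
    ring
  linarith

private lemma amgm (T : ℕ) (hT : 1 ≤ T) (a x : ℝ) (ha : 0 < a) (hx : 0 ≤ x) :
    x ^ T * (a - x) ≤ (T : ℝ) ^ T * a ^ (T + 1) / ((T : ℝ) + 1) ^ (T + 1) := by
  have hT0 : (0 : ℝ) < T := by exact_mod_cast hT
  have hT1 : (0 : ℝ) < (T : ℝ) + 1 := by linarith
  set c : ℝ := a * T / (T + 1) with hc
  have hc0 : 0 < c := by positivity
  set t : ℝ := x / c with htdef
  have ht : 0 ≤ t := by positivity
  have hxc : x = t * c := by rw [htdef, div_mul_cancel₀ x hc0.ne']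
  have key := key_poly T t ht
  have hkey2 : t ^ T * (((T : ℝ) + 1) - t * T) ≤ 1 := by
    rw [pow_succ] at key; nlinarith [pow_nonneg ht T]
  have hcT : (0:ℝ) ≤ c ^ T := by positivity
  have hmain : t ^ T * (a - t * c) ≤ a / ((T : ℝ) + 1) := by
    have hac : a - t * c = a * (((T:ℝ) + 1) - t * T) / ((T:ℝ) + 1) := by
      rw [hc]; field_simp
    rw [hac, ← mul_div_assoc, div_le_div_iff₀ hT1 hT1]
    calc t ^ T * (a * (((T:ℝ) + 1) - t * T)) * ((T:ℝ)+1)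
        = (t ^ T * (((T : ℝ) + 1) - t * T)) * (a * ((T:ℝ)+1)) := by ring
      _ ≤ 1 * (a * ((T:ℝ)+1)) := by
          apply mul_le_mul_of_nonneg_right hkey2; positivity
      _ = a * ((T:ℝ)+1) := by ring
  have heq : x ^ T * (a - x) = c ^ T * (t ^ T * (a - t * c)) := by
    rw [hxc, mul_pow]; ring
  have heq2 : (T : ℝ) ^ T * a ^ (T + 1) / ((T : ℝ) + 1) ^ (T + 1)
      = c ^ T * (a / ((T : ℝ) + 1)) := by
    rw [hc, div_pow, mul_pow, pow_succ]
    field_simp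
    ring
  rw [heq, heq2]
  exact mul_le_mul_of_nonneg_left hmain hcT

/-- The network constants are largest in the complete-graph
case. -/
theorem delta_constants_complete_graph_best (T₀ : ℕ) (hT₀ : 1 ≤ T₀) (s lam : ℝ)
    (hs0 : 0 ≤ s) (hs1 : s < 1) (hlam0 : 0 < lam) (hlam1 : lam < 1) :
    lam * ((1 - s) ^ 2 - lam ^ ((1 : ℝ) / T₀)) ≤
      (T₀ : ℝ) ^ T₀ * (1 - s) ^ (2 * T₀ + 2) / (1 + (T₀ : ℝ)) ^ (T₀ + 1) ∧
    lam * (1 - lam ^ ((1 : ℝ) / T₀)) ≤ (T₀ : ℝ) ^ T₀ / (1 + (T₀ : ℝ)) ^ (T₀ + 1) := by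
  have hT0 : (T₀ : ℝ) ≠ 0 := by positivity
  set μ : ℝ := lam ^ ((1 : ℝ) / T₀) with hμdef
  have hμ0 : 0 ≤ μ := Real.rpow_nonneg hlam0.le _
  have hμpow : μ ^ T₀ = lam := by
    rw [hμdef, ← Real.rpow_natCast (lam ^ ((1:ℝ)/T₀)) T₀, ← Real.rpow_mul hlam0.le,
      one_div_mul_cancel hT0, Real.rpow_one]
  have hcomm : (1 + (T₀ : ℝ)) = ((T₀ : ℝ) + 1) := by ring
  constructor
  · have ha : (0:ℝ) < (1 - s) ^ 2 := by nlinarith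
    have h := amgm T₀ hT₀ ((1 - s) ^ 2) μ ha hμ0
    rw [hμpow] at h
    rw [hcomm]
    calc lam * ((1 - s) ^ 2 - μ)
        ≤ (T₀ : ℝ) ^ T₀ * ((1 - s) ^ 2) ^ (T₀ + 1) / ((T₀ : ℝ) + 1) ^ (T₀ + 1) := h
      _ = (T₀ : ℝ) ^ T₀ * (1 - s) ^ (2 * T₀ + 2) / ((T₀ : ℝ) + 1) ^ (T₀ + 1) := by
          rw [← pow_mul]; ring_nf
  · have h := amgm T₀ hT₀ 1 μ one_pos hμ0
    rw [hμpow, one_pow, mul_one] at h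
    rw [hcomm]
    exact h

end
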